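/- The function 𝔽(t₁, t₂, t₃) = t₁³/12 + (1/2)t₂t₃t₁ − (1/6)t₂³t₃ − (1/8)t₃² log t₃, defined for t₃ > 0, has constant invertible matrix of third derivatives ηᵢⱼ = ∂_{t₁}∂_{tᵢ}∂_{tⱼ}𝔽, namely η₁₁ = 1/2, η₂₃ = η₃₂ = 1/2, and all other entries 0, and 𝔽 satisfies the WDVV associativity equations with respect to η. -/

import Mathlib

open Matrix

/-- Partial derivatives of a function of three real variables. -/
noncomputable def P1 (f : ℝ → ℝ → ℝ → ℝ) : ℝ → ℝ → ℝ → ℝ :=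
  fun x y z => deriv (fun x' => f x' y z) x
noncomputable def P2 (f : ℝ → ℝ → ℝ → ℝ) : ℝ → ℝ → ℝ → ℝ :=
  fun x y z => deriv (fun y' => f x y' z) y
noncomputable def P3 (f : ℝ → ℝ → ℝ → ℝ) : ℝ → ℝ → ℝ → ℝ :=
  fun x y z => deriv (fun z' => f x y z') z

/-- Partial derivative in the i-th variable (i : Fin 3). -/
noncomputable def D (i : Fin 3) : (ℝ → ℝ → ℝ → ℝ) → (ℝ → ℝ → ℝ → ℝ) :=
  if i = 0 then P1 else if i = 1 then P2 else P3

/-- The potential 𝔽 = t₁³/12 + (1/2)t₂t₃t₁ − (1/6)t₂³t₃ − (1/8)t₃² log t₃. -/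
noncomputable def Fpot (t₁ t₂ t₃ : ℝ) : ℝ :=
  t₁^3/12 + (1/2) * t₂ * t₃ * t₁ - (1/6) * t₂^3 * t₃ - (1/8) * t₃^2 * Real.log t₃

/-- The flat metric η: η₁₁ = 1/2, η₂₃ = η₃₂ = 1/2, other entries 0. -/
noncomputable def eta : Matrix (Fin 3) (Fin 3) ℝ := !![1/2, 0, 0; 0, 0, 1/2; 0, 1/2, 0]

lemma D0 : D 0 = P1 := rfl
lemma D1 : D 1 = P2 := rfl
lemma D2 : D 2 = P3 := rfl

-- first derivatives
lemma d1F (x y z : ℝ) : P1 Fpot x y z = x^2/4 + y*z/2 := by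
  have e : (fun x' : ℝ => Fpot x' y z)
      = fun x' => x'^3/12 + ((1/2)*y*z)*x' - ((1/6)*y^3*z + (1/8)*z^2*Real.log z) := by
    funext x'; simp only [Fpot]; ring
  have h : HasDerivAt (fun x' : ℝ => x'^3/12 + ((1/2)*y*z)*x' - ((1/6)*y^3*z + (1/8)*z^2*Real.log z))
      (((3:ℕ):ℝ)*x^(3-1)/12 + ((1/2)*y*z)*1) x :=
    (((hasDerivAt_pow 3 x).div_const 12).add ((hasDerivAt_id x).const_mul ((1/2)*y*z))).sub_const _
  rw [P1, e, h.deriv]; push_cast; ring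

lemma d2F (x y z : ℝ) : P2 Fpot x y z = x*z/2 - y^2*z/2 := by
  have e : (fun y' : ℝ => Fpot x y' z)
      = fun y' => (x^3/12 - (1/8)*z^2*Real.log z) + ((1/2)*z*x)*y' - ((1/6)*z)*y'^3 := by
    funext y'; simp only [Fpot]; ring
  have h : HasDerivAt (fun y' : ℝ => (x^3/12 - (1/8)*z^2*Real.log z) + ((1/2)*z*x)*y' - ((1/6)*z)*y'^3)
      (((1/2)*z*x)*1 - ((1/6)*z)*(((3:ℕ):ℝ)*y^(3-1))) y :=
    (((hasDerivAt_id y).const_mul ((1/2)*z*x)).const_add _).sub ((hasDerivAt_pow 3 y).const_mul _)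
  rw [P2, e, h.deriv]; push_cast; ring

lemma d3F (x y z : ℝ) (hz : 0 < z) :
    P3 Fpot x y z = x*y/2 - y^3/6 - z*Real.log z/4 - z/8 := by
  have e : (fun z' : ℝ => Fpot x y z')
      = fun z' => x^3/12 + ((1/2)*y*x - (1/6)*y^3)*z' - (1/8)*(z'^2*Real.log z') := by
    funext z'; simp only [Fpot]; ring
  have h : HasDerivAt (fun z' : ℝ => x^3/12 + ((1/2)*y*x - (1/6)*y^3)*z' - (1/8)*(z'^2*Real.log z'))
      ((((1/2)*y*x - (1/6)*y^3)*1) - (1/8)*((((2:ℕ):ℝ)*z^(2-1))*Real.log z + z^2*z⁻¹)) z :=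
    ((((hasDerivAt_id z).const_mul _).const_add _)).sub
      (((hasDerivAt_pow 2 z).mul (Real.hasDerivAt_log hz.ne')).const_mul _)
  rw [P3, e, h.deriv]; push_cast; field_simp; ring

-- second derivatives
lemma d11 (x y z : ℝ) : P1 (P1 Fpot) x y z = x/2 := by
  have e : (fun x' : ℝ => P1 Fpot x' y z) = fun x' => x'^2/4 + y*z/2 :=
    funext fun x' => d1F x' y z
  have h : HasDerivAt (fun x' : ℝ => x'^2/4 + y*z/2) (((2:ℕ):ℝ)*x^(2-1)/4) x :=
    ((hasDerivAt_pow 2 x).div_const 4).add_const _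
  rw [P1, e, h.deriv]; push_cast; ring

lemma d21 (x y z : ℝ) : P2 (P1 Fpot) x y z = z/2 := by
  have e : (fun y' : ℝ => P1 Fpot x y' z) = fun y' => x^2/4 + (z/2)*y' := by
    funext y'; rw [d1F]; ring
  have h : HasDerivAt (fun y' : ℝ => x^2/4 + (z/2)*y') ((z/2)*1) y :=
    ((hasDerivAt_id y).const_mul _).const_add _
  rw [P2, e, h.deriv]; ring

lemma d31 (x y z : ℝ) : P3 (P1 Fpot) x y z = y/2 := by
  have e : (fun z' : ℝ => P1 Fpot x y z') = fun z' => x^2/4 + (y/2)*z' := by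
    funext z'; rw [d1F]; ring
  have h : HasDerivAt (fun z' : ℝ => x^2/4 + (y/2)*z') ((y/2)*1) z :=
    ((hasDerivAt_id z).const_mul _).const_add _
  rw [P3, e, h.deriv]; ring

lemma d12 (x y z : ℝ) : P1 (P2 Fpot) x y z = z/2 := by
  have e : (fun x' : ℝ => P2 Fpot x' y z) = fun x' => (z/2)*x' - y^2*z/2 := by
    funext x'; rw [d2F]; ring
  have h : HasDerivAt (fun x' : ℝ => (z/2)*x' - y^2*z/2) ((z/2)*1) x :=
    ((hasDerivAt_id x).const_mul _).sub_const _
  rw [P1, e, h.deriv]; ring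

lemma d22 (x y z : ℝ) : P2 (P2 Fpot) x y z = -(y*z) := by
  have e : (fun y' : ℝ => P2 Fpot x y' z) = fun y' => x*z/2 - (z/2)*y'^2 := by
    funext y'; rw [d2F]; ring
  have h : HasDerivAt (fun y' : ℝ => x*z/2 - (z/2)*y'^2) (0 - (z/2)*(((2:ℕ):ℝ)*y^(2-1))) y :=
    (hasDerivAt_const y _).sub ((hasDerivAt_pow 2 y).const_mul _)
  rw [P2, e, h.deriv]; push_cast; ring

lemma d32 (x y z : ℝ) : P3 (P2 Fpot) x y z = x/2 - y^2/2 := by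
  have e : (fun z' : ℝ => P2 Fpot x y z') = fun z' => (x/2 - y^2/2)*z' := by
    funext z'; rw [d2F]; ring
  have h : HasDerivAt (fun z' : ℝ => (x/2 - y^2/2)*z') ((x/2 - y^2/2)*1) z :=
    (hasDerivAt_id z).const_mul _
  rw [P3, e, h.deriv]; ring

lemma d13 (x y z : ℝ) (hz : 0 < z) : P1 (P3 Fpot) x y z = y/2 := by
  have e : (fun x' : ℝ => P3 Fpot x' y z) = fun x' => (y/2)*x' - (y^3/6 + z*Real.log z/4 + z/8) := by
    funext x'; rw [d3F x' y z hz]; ring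
  have h : HasDerivAt (fun x' : ℝ => (y/2)*x' - (y^3/6 + z*Real.log z/4 + z/8)) ((y/2)*1) x :=
    ((hasDerivAt_id x).const_mul _).sub_const _
  rw [P1, e, h.deriv]; ring

lemma d23 (x y z : ℝ) (hz : 0 < z) : P2 (P3 Fpot) x y z = x/2 - y^2/2 := by
  have e : (fun y' : ℝ => P3 Fpot x y' z)
      = fun y' => ((x/2)*y' - (1/6)*y'^3) - (z*Real.log z/4 + z/8) := by
    funext y'; rw [d3F x y' z hz]; ring
  have h : HasDerivAt (fun y' : ℝ => ((x/2)*y' - (1/6)*y'^3) - (z*Real.log z/4 + z/8))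
      ((x/2)*1 - (1/6)*(((3:ℕ):ℝ)*y^(3-1))) y :=
    (((hasDerivAt_id y).const_mul _).sub ((hasDerivAt_pow 3 y).const_mul _)).sub_const _
  rw [P2, e, h.deriv]; push_cast; ring

lemma d33 (x y z : ℝ) (hz : 0 < z) : P3 (P3 Fpot) x y z = -(Real.log z)/4 - 3/8 := by
  have hev : (fun z' : ℝ => P3 Fpot x y z')
      =ᶠ[nhds z] fun z' => (x*y/2 - y^3/6) - (1/4)*(z'*Real.log z') - (1/8)*z' := by
    filter_upwards [eventually_gt_nhds hz] with z' hz'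
    rw [d3F x y z' hz']; ring
  have h : HasDerivAt (fun z' : ℝ => (x*y/2 - y^3/6) - (1/4)*(z'*Real.log z') - (1/8)*z')
      ((0 - (1/4)*(1*Real.log z + z*z⁻¹)) - (1/8)*1) z :=
    ((hasDerivAt_const z _).sub
      (((hasDerivAt_id z).mul (Real.hasDerivAt_log hz.ne')).const_mul _)).sub
      ((hasDerivAt_id z).const_mul _)
  rw [P3, hev.deriv_eq, h.deriv]; field_simp; ring
-- third derivatives
section Third
variable (x y z : ℝ)

lemma t111 : P1 (P1 (P1 Fpot)) x y z = 1/2 := by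
  have e : (fun x' : ℝ => P1 (P1 Fpot) x' y z) = fun x' => (1/2)*x' := by
    funext x'; rw [d11]; ring
  have h : HasDerivAt (fun x' : ℝ => (1/2)*x') ((1/2)*1) x := (hasDerivAt_id x).const_mul _
  rw [P1, e, h.deriv]; ring

lemma t112 : P1 (P1 (P2 Fpot)) x y z = 0 := by
  have e : (fun x' : ℝ => P1 (P2 Fpot) x' y z) = fun _ => z/2 := funext fun x' => d12 x' y z
  rw [P1, e, deriv_const]

lemma t113 (hz : 0 < z) : P1 (P1 (P3 Fpot)) x y z = 0 := by
  have e : (fun x' : ℝ => P1 (P3 Fpot) x' y z) = fun _ => y/2 :=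
    funext fun x' => d13 x' y z hz
  rw [P1, e, deriv_const]

lemma t121 : P1 (P2 (P1 Fpot)) x y z = 0 := by
  have e : (fun x' : ℝ => P2 (P1 Fpot) x' y z) = fun _ => z/2 := funext fun x' => d21 x' y z
  rw [P1, e, deriv_const]

lemma t122 : P1 (P2 (P2 Fpot)) x y z = 0 := by
  have e : (fun x' : ℝ => P2 (P2 Fpot) x' y z) = fun _ => -(y*z) := funext fun x' => d22 x' y z
  rw [P1, e, deriv_const]

lemma t123 (hz : 0 < z) : P1 (P2 (P3 Fpot)) x y z = 1/2 := by
  have e : (fun x' : ℝ => P2 (P3 Fpot) x' y z) = fun x' => (1/2)*x' - y^2/2 := by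
    funext x'; rw [d23 x' y z hz]; ring
  have h : HasDerivAt (fun x' : ℝ => (1/2)*x' - y^2/2) ((1/2)*1) x :=
    ((hasDerivAt_id x).const_mul _).sub_const _
  rw [P1, e, h.deriv]; ring

lemma t131 : P1 (P3 (P1 Fpot)) x y z = 0 := by
  have e : (fun x' : ℝ => P3 (P1 Fpot) x' y z) = fun _ => y/2 := funext fun x' => d31 x' y z
  rw [P1, e, deriv_const]

lemma t132 : P1 (P3 (P2 Fpot)) x y z = 1/2 := by
  have e : (fun x' : ℝ => P3 (P2 Fpot) x' y z) = fun x' => (1/2)*x' - y^2/2 := by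
    funext x'; rw [d32]; ring
  have h : HasDerivAt (fun x' : ℝ => (1/2)*x' - y^2/2) ((1/2)*1) x :=
    ((hasDerivAt_id x).const_mul _).sub_const _
  rw [P1, e, h.deriv]; ring

lemma t133 (hz : 0 < z) : P1 (P3 (P3 Fpot)) x y z = 0 := by
  have e : (fun x' : ℝ => P3 (P3 Fpot) x' y z) = fun _ => -(Real.log z)/4 - 3/8 :=
    funext fun x' => d33 x' y z hz
  rw [P1, e, deriv_const]

lemma t211 : P2 (P1 (P1 Fpot)) x y z = 0 := by
  have e : (fun y' : ℝ => P1 (P1 Fpot) x y' z) = fun _ => x/2 := funext fun y' => d11 x y' z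
  rw [P2, e, deriv_const]

lemma t212 : P2 (P1 (P2 Fpot)) x y z = 0 := by
  have e : (fun y' : ℝ => P1 (P2 Fpot) x y' z) = fun _ => z/2 := funext fun y' => d12 x y' z
  rw [P2, e, deriv_const]

lemma t213 (hz : 0 < z) : P2 (P1 (P3 Fpot)) x y z = 1/2 := by
  have e : (fun y' : ℝ => P1 (P3 Fpot) x y' z) = fun y' => (1/2)*y' := by
    funext y'; rw [d13 x y' z hz]; ring
  have h : HasDerivAt (fun y' : ℝ => (1/2)*y') ((1/2)*1) y := (hasDerivAt_id y).const_mul _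
  rw [P2, e, h.deriv]; ring

lemma t221 : P2 (P2 (P1 Fpot)) x y z = 0 := by
  have e : (fun y' : ℝ => P2 (P1 Fpot) x y' z) = fun _ => z/2 := funext fun y' => d21 x y' z
  rw [P2, e, deriv_const]

lemma t222 : P2 (P2 (P2 Fpot)) x y z = -z := by
  have e : (fun y' : ℝ => P2 (P2 Fpot) x y' z) = fun y' => (-z)*y' := by
    funext y'; rw [d22]; ring
  have h : HasDerivAt (fun y' : ℝ => (-z)*y') ((-z)*1) y := (hasDerivAt_id y).const_mul _
  rw [P2, e, h.deriv]; ring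

lemma t223 (hz : 0 < z) : P2 (P2 (P3 Fpot)) x y z = -y := by
  have e : (fun y' : ℝ => P2 (P3 Fpot) x y' z) = fun y' => x/2 - (1/2)*y'^2 := by
    funext y'; rw [d23 x y' z hz]; ring
  have h : HasDerivAt (fun y' : ℝ => x/2 - (1/2)*y'^2) (0 - (1/2)*(((2:ℕ):ℝ)*y^(2-1))) y :=
    (hasDerivAt_const y _).sub ((hasDerivAt_pow 2 y).const_mul _)
  rw [P2, e, h.deriv]; push_cast; ring

lemma t231 : P2 (P3 (P1 Fpot)) x y z = 1/2 := by
  have e : (fun y' : ℝ => P3 (P1 Fpot) x y' z) = fun y' => (1/2)*y' := by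
    funext y'; rw [d31]; ring
  have h : HasDerivAt (fun y' : ℝ => (1/2)*y') ((1/2)*1) y := (hasDerivAt_id y).const_mul _
  rw [P2, e, h.deriv]; ring

lemma t232 : P2 (P3 (P2 Fpot)) x y z = -y := by
  have e : (fun y' : ℝ => P3 (P2 Fpot) x y' z) = fun y' => x/2 - (1/2)*y'^2 := by
    funext y'; rw [d32]; ring
  have h : HasDerivAt (fun y' : ℝ => x/2 - (1/2)*y'^2) (0 - (1/2)*(((2:ℕ):ℝ)*y^(2-1))) y :=
    (hasDerivAt_const y _).sub ((hasDerivAt_pow 2 y).const_mul _)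
  rw [P2, e, h.deriv]; push_cast; ring

lemma t233 (hz : 0 < z) : P2 (P3 (P3 Fpot)) x y z = 0 := by
  have e : (fun y' : ℝ => P3 (P3 Fpot) x y' z) = fun _ => -(Real.log z)/4 - 3/8 :=
    funext fun y' => d33 x y' z hz
  rw [P2, e, deriv_const]

lemma t311 : P3 (P1 (P1 Fpot)) x y z = 0 := by
  have e : (fun z' : ℝ => P1 (P1 Fpot) x y z') = fun _ => x/2 := funext fun z' => d11 x y z'
  rw [P3, e, deriv_const]

lemma t312 : P3 (P1 (P2 Fpot)) x y z = 1/2 := by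
  have e : (fun z' : ℝ => P1 (P2 Fpot) x y z') = fun z' => (1/2)*z' := by
    funext z'; rw [d12]; ring
  have h : HasDerivAt (fun z' : ℝ => (1/2)*z') ((1/2)*1) z := (hasDerivAt_id z).const_mul _
  rw [P3, e, h.deriv]; ring

lemma t313 (hz : 0 < z) : P3 (P1 (P3 Fpot)) x y z = 0 := by
  have hev : (fun z' : ℝ => P1 (P3 Fpot) x y z') =ᶠ[nhds z] fun _ => y/2 := by
    filter_upwards [eventually_gt_nhds hz] with z' hz' using d13 x y z' hz'
  rw [P3, hev.deriv_eq, deriv_const]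

lemma t321 : P3 (P2 (P1 Fpot)) x y z = 1/2 := by
  have e : (fun z' : ℝ => P2 (P1 Fpot) x y z') = fun z' => (1/2)*z' := by
    funext z'; rw [d21]; ring
  have h : HasDerivAt (fun z' : ℝ => (1/2)*z') ((1/2)*1) z := (hasDerivAt_id z).const_mul _
  rw [P3, e, h.deriv]; ring

lemma t322 : P3 (P2 (P2 Fpot)) x y z = -y := by
  have e : (fun z' : ℝ => P2 (P2 Fpot) x y z') = fun z' => (-y)*z' := by
    funext z'; rw [d22]; ring
  have h : HasDerivAt (fun z' : ℝ => (-y)*z') ((-y)*1) z := (hasDerivAt_id z).const_mul _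
  rw [P3, e, h.deriv]; ring

lemma t323 (hz : 0 < z) : P3 (P2 (P3 Fpot)) x y z = 0 := by
  have hev : (fun z' : ℝ => P2 (P3 Fpot) x y z') =ᶠ[nhds z] fun _ => x/2 - y^2/2 := by
    filter_upwards [eventually_gt_nhds hz] with z' hz' using d23 x y z' hz'
  rw [P3, hev.deriv_eq, deriv_const]

lemma t331 : P3 (P3 (P1 Fpot)) x y z = 0 := by
  have e : (fun z' : ℝ => P3 (P1 Fpot) x y z') = fun _ => y/2 := funext fun z' => d31 x y z'
  rw [P3, e, deriv_const]

lemma t332 : P3 (P3 (P2 Fpot)) x y z = 0 := by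
  have e : (fun z' : ℝ => P3 (P2 Fpot) x y z') = fun _ => x/2 - y^2/2 :=
    funext fun z' => d32 x y z'
  rw [P3, e, deriv_const]

lemma t333 (hz : 0 < z) : P3 (P3 (P3 Fpot)) x y z = -(1/(4*z)) := by
  have hev : (fun z' : ℝ => P3 (P3 Fpot) x y z')
      =ᶠ[nhds z] fun z' => -(1/4)*Real.log z' - 3/8 := by
    filter_upwards [eventually_gt_nhds hz] with z' hz'
    rw [d33 x y z' hz']; ring
  have h : HasDerivAt (fun z' : ℝ => -(1/4)*Real.log z' - 3/8) (-(1/4)*z⁻¹) z :=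
    ((Real.hasDerivAt_log hz.ne').const_mul _).sub_const _
  rw [P3, hev.deriv_eq, h.deriv]; field_simp

end Third

/-- Table of third derivatives of `Fpot` at a point `(x, y, z)` with `0 < z`. -/
noncomputable def Ttab (x y z : ℝ) : Fin 3 → Matrix (Fin 3) (Fin 3) ℝ :=
  ![!![1/2, 0, 0; 0, 0, 1/2; 0, 1/2, 0],
    !![0, 0, 1/2; 0, -z, -y; 1/2, -y, 0],
    !![0, 1/2, 0; 1/2, -y, 0; 0, 0, -(1/(4*z))]]

lemma third (x y z : ℝ) (hz : 0 < z) (i j k : Fin 3) :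
    D i (D j (D k Fpot)) x y z = Ttab x y z i j k := by
  fin_cases i <;> fin_cases j <;> fin_cases k <;>
    first
      | exact t111 x y z | exact t112 x y z | exact t113 x y z hz
      | exact t121 x y z | exact t122 x y z | exact t123 x y z hz
      | exact t131 x y z | exact t132 x y z | exact t133 x y z hz
      | exact t211 x y z | exact t212 x y z | exact t213 x y z hz
      | exact t221 x y z | exact t222 x y z | exact t223 x y z hz
      | exact t231 x y z | exact t232 x y z | exact t233 x y z hz
      | exact t311 x y z | exact t312 x y z | exact t313 x y z hz
      | exact t321 x y z | exact t322 x y z | exact t323 x y z hz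
      | exact t331 x y z | exact t332 x y z | exact t333 x y z hz

lemma eta_inv : eta⁻¹ = !![2, 0, 0; 0, 0, 2; 0, 2, 0] := by
  apply Matrix.inv_eq_right_inv
  norm_num [eta, Matrix.mul_fin_three]
  exact Matrix.one_fin_three.symm


set_option maxHeartbeats 2000000 in
/-- for t₃ > 0, the third derivatives ∂₁∂ᵢ∂ⱼ𝔽 form the constant invertible
matrix η, and 𝔽 satisfies the WDVV associativity equations with respect to η. -/
theorem stmt_9 (t₁ t₂ t₃ : ℝ) (h : 0 < t₃) :
    (∀ i j : Fin 3, D 0 (D i (D j Fpot)) t₁ t₂ t₃ = eta i j) ∧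
    IsUnit eta.det ∧
    (∀ i j q n : Fin 3,
      ∑ k : Fin 3, ∑ p : Fin 3,
        D i (D j (D k Fpot)) t₁ t₂ t₃ * eta⁻¹ k p * D p (D q (D n Fpot)) t₁ t₂ t₃
      = ∑ k : Fin 3, ∑ p : Fin 3,
        D n (D j (D k Fpot)) t₁ t₂ t₃ * eta⁻¹ k p * D p (D q (D i Fpot)) t₁ t₂ t₃) := by
  refine ⟨?_, ?_, ?_⟩
  · intro i j
    rw [third t₁ t₂ t₃ h 0 i j]
    fin_cases i <;> fin_cases j <;> simp [Ttab, eta]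
  · rw [show eta.det = -(1/8 : ℝ) by simp [eta, Matrix.det_fin_three]; norm_num]
    exact isUnit_iff_ne_zero.mpr (by norm_num)
  · intro i j q n
    fin_cases i <;> fin_cases j <;> fin_cases q <;> fin_cases n <;>
      (simp only [Fin.sum_univ_three, third t₁ t₂ t₃ h, eta_inv, Ttab]
       try simp
       try norm_num [Matrix.vecHead, Matrix.vecTail]
       try field_simp
       try ring)
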